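/- Let {e,h,f} ⊂ 𝔤 be an sl₂-triple with [h,e]=e, [h,f]=−f, [e,f]=2h in a finite-dimensional complex Lie algebra with invariant nondegenerate symmetric bilinear form ⟨·,·⟩. Then the restriction of ⟨·,·⟩ to the pairing 𝔤^f × 𝔤^e (centralizer of f paired with centralizer of e) is nondegenerate; i.e., 𝔤^f is dual to 𝔤^e under ⟨·,·⟩. -/

import Mathlib

open Module LinearMap

section EndLemmas

variable {V : Type*} [AddCommGroup V] [Module ℂ V]

/-- Key ladder identity. -/
lemma shiftOp (H A : Module.End ℂ V) (d : ℂ) (hA : H * A = A * H + d • A) (c : ℂ) (m : ℕ) :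
    (H - (c + d) • 1) ^ m * A = A * (H - c • 1) ^ m := by
  induction m with
  | zero => simp
  | succ m ih =>
    have h1 : (H - (c + d) • 1) * A = A * (H - c • 1) := by
      simp only [sub_mul, mul_sub, hA, smul_mul_assoc, mul_smul_comm, one_mul, mul_one]
      match_scalars <;> ring
    calc (H - (c + d) • 1) ^ (m + 1) * A
        = (H - (c + d) • 1) ^ m * ((H - (c + d) • 1) * A) := by
          rw [pow_succ, mul_assoc]
      _ = (H - (c + d) • 1) ^ m * A * (H - c • 1) := by rw [h1, mul_assoc]
      _ = A * (H - c • 1) ^ (m + 1) := by rw [ih, pow_succ, mul_assoc]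

lemma shiftMem (H A : Module.End ℂ V) (d : ℂ) (hA : H * A = A * H + d • A) (c : ℂ) {v : V}
    (hv : v ∈ H.maxGenEigenspace c) : A v ∈ H.maxGenEigenspace (c + d) := by
  rw [Module.End.mem_maxGenEigenspace] at hv ⊢
  obtain ⟨k, hk⟩ := hv
  refine ⟨k, ?_⟩
  have h2 : ((H - (c + d) • 1) ^ k * A) v = (A * (H - c • 1) ^ k) v := by
    rw [shiftOp H A d hA c k]
  simpa [Module.End.mul_apply, hk] using h2

lemma memH (H : Module.End ℂ V) (c : ℂ) {v : V}
    (hv : v ∈ H.maxGenEigenspace c) : H v ∈ H.maxGenEigenspace c := by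
  have := shiftMem H H 0 (by simp) c hv
  simpa using this

lemma eigOfGen (H : Module.End ℂ V) {μ ν : ℂ} (hne : ν ≠ μ) {v : V}
    (hv : v ∈ H.maxGenEigenspace μ) (hv' : H v = ν • v) : v = 0 := by
  rw [Module.End.mem_maxGenEigenspace] at hv
  obtain ⟨k, hk⟩ := hv
  have key : ∀ m : ℕ, ((H - μ • 1) ^ m) v = (ν - μ) ^ m • v := by
    intro m
    induction m with
    | zero => simp
    | succ m ih =>
      rw [pow_succ', Module.End.mul_apply, ih, map_smul]
      simp only [LinearMap.sub_apply, hv', LinearMap.smul_apply, Module.End.one_apply]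
      rw [← sub_smul, smul_smul, pow_succ, mul_comm]
  rw [key k] at hk
  have h2 : (ν - μ) ^ k ≠ 0 := pow_ne_zero _ (sub_ne_zero.mpr hne)
  exact (smul_eq_zero.mp hk).resolve_left h2

lemma powHE (H E : Module.End ℂ V) (hHE : H * E = E * H + E) (j : ℕ) :
    H * E ^ j = E ^ j * H + (j : ℂ) • E ^ j := by
  induction j with
  | zero => simp
  | succ j ih =>
    have : H * E ^ (j + 1) = (H * E ^ j) * E := by rw [pow_succ, mul_assoc]
    rw [this, ih, add_mul, smul_mul_assoc, mul_assoc, hHE, ← pow_succ, mul_add, ← mul_assoc,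
      ← pow_succ]
    push_cast
    match_scalars <;> ring

lemma commFE (E F H : Module.End ℂ V) (hFE : F * E = E * F - (2 : ℂ) • H)
    (hHE : H * E = E * H + E) (k : ℕ) :
    F * E ^ (k + 1) = E ^ (k + 1) * F
      - ((k : ℂ) + 1) • (E ^ k * ((2 : ℂ) • H + (k : ℂ) • 1)) := by
  induction k with
  | zero => simpa using hFE
  | succ k ih =>
    have h0 : F * E ^ (k + 1 + 1) = (F * E ^ (k + 1)) * E := by rw [pow_succ, mul_assoc]
    rw [h0, ih]
    simp only [sub_mul, mul_add, add_mul, smul_mul_assoc, mul_smul_comm, one_mul, mul_one,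
      smul_add, smul_smul, mul_assoc]
    rw [hFE, hHE]
    simp only [mul_add, mul_sub, smul_add, smul_sub, mul_smul_comm, smul_smul, ← mul_assoc,
      ← pow_succ]
    push_cast
    match_scalars <;> ring

end EndLemmas

section Core

variable {g : Type*} [LieRing g] [LieAlgebra ℂ g] [FiniteDimensional ℂ g]

lemma adEq (a b : g) : (LieAlgebra.ad ℂ g) ⁅a, b⁆
    = (LieAlgebra.ad ℂ g) a * (LieAlgebra.ad ℂ g) b
      - (LieAlgebra.ad ℂ g) b * (LieAlgebra.ad ℂ g) a := by
  ext x; simp only [LieAlgebra.ad_apply, LinearMap.sub_apply, Module.End.mul_apply, lie_lie]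

lemma core (e h f : g) (hh : h ≠ 0)
    (hhe : ⁅h, e⁆ = e) (hhf : ⁅h, f⁆ = -f) (hef : ⁅e, f⁆ = (2 : ℂ) • h) :
    LinearMap.ker ((LieAlgebra.ad ℂ g) f)
      ⊓ LinearMap.range ((LieAlgebra.ad ℂ g) e) = ⊥ := by
  set H : Module.End ℂ g := (LieAlgebra.ad ℂ g) h with hHdef
  set E : Module.End ℂ g := (LieAlgebra.ad ℂ g) e with hEdef
  set F : Module.End ℂ g := (LieAlgebra.ad ℂ g) f with hFdef
  have hHE : H * E = E * H + E := by
    have h1 := adEq h e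
    rw [hhe, ← hHdef, ← hEdef] at h1
    have h2 : H * E - E * H = E := h1.symm
    rw [sub_eq_iff_eq_add] at h2
    rw [h2]; abel
  have hHF : H * F = F * H + (-1 : ℂ) • F := by
    have h1 := adEq h f
    rw [hhf, map_neg, ← hHdef, ← hFdef] at h1
    have h2 : F * H - H * F = F := by rw [← neg_sub]; rw [← neg_inj.mpr h1]; abel
    rw [sub_eq_iff_eq_add] at h2
    have h3 : H * F = F * H - F := by rw [h2]; abel
    rw [h3]; match_scalars <;> ring
  have hFE : F * E = E * F - (2 : ℂ) • H := by
    have h1 := adEq e f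
    rw [hef, map_smul, ← hHdef, ← hEdef, ← hFdef] at h1
    have h2 : E * F - F * E = (2 : ℂ) • H := h1.symm
    rw [sub_eq_iff_eq_add] at h2
    rw [h2]; abel
  set U : Submodule ℂ g := LinearMap.ker F ⊓ LinearMap.range E with hUdef
  show U = ⊥
  by_contra hU
  have : Nontrivial U := Submodule.nontrivial_iff_ne_bot.mpr hU
  have hUstab : ∀ u ∈ U, H u ∈ U := by
    intro u hu
    obtain ⟨huF, v, hv⟩ := hu
    have hFH : F * H = H * F + F := by rw [hHF]; match_scalars <;> ring
    have huF' : F u = 0 := huF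
    constructor
    · show F (H u) = 0
      have h4 : (F * H) u = (H * F + F) u := by rw [hFH]
      simp only [Module.End.mul_apply, LinearMap.add_apply, huF', map_zero, zero_add] at h4
      exact h4
    · refine ⟨H v + v, ?_⟩
      have : (H * E) v = (E * H + E) v := by rw [hHE]
      simp only [Module.End.mul_apply, LinearMap.add_apply] at this
      rw [map_add, ← this, hv]
  obtain ⟨ν, hν⟩ := Module.End.exists_eigenvalue (H.restrict hUstab)
  obtain ⟨v, hveig, hvne⟩ := hν.exists_hasEigenvector
  set x₀ : g := (v : g) with hx₀def
  have hx₀ne : x₀ ≠ 0 := fun hc => hvne (Subtype.ext hc)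
  have hx₀eig : H x₀ = ν • x₀ := by
    have h5 := Module.End.mem_genEigenspace_one.mp hveig
    have := congrArg (Subtype.val : U → g) h5
    simpa [LinearMap.restrict_apply] using this
  have hx₀F : F x₀ = 0 := v.2.1
  have hx₀range : x₀ ∈ LinearMap.range E := v.2.2
  -- the sl2 triple and integrality of the eigenvalue
  have t : IsSl2Triple ((2 : ℂ) • h) e f := by
    refine ⟨smul_ne_zero two_ne_zero hh, hef, ?_, ?_⟩
    · rw [smul_lie, hhe, ← Nat.cast_smul_eq_nsmul ℂ 2 e]; norm_num
    · rw [smul_lie, hhf, ← Nat.cast_smul_eq_nsmul ℂ 2 f]; norm_num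
  have prim : t.symm.HasPrimitiveVectorWith x₀ (-(2 * ν)) := by
    refine ⟨hx₀ne, ?_, hx₀F⟩
    rw [neg_lie, smul_lie]
    have : ⁅h, x₀⁆ = ν • x₀ := hx₀eig
    rw [this]
    match_scalars; ring
  obtain ⟨n, hn⟩ := prim.exists_nat
  have h2ν : (2:ℂ) * ν = -(n:ℂ) := by linear_combination -hn
  set W : ℂ → Submodule ℂ g := fun μ => H.maxGenEigenspace μ with hWdef
  have hA : H * E = E * H + (1:ℂ) • E := by rw [hHE, one_smul]
  have hWE : ∀ (c : ℂ) {w : g}, w ∈ W c → E w ∈ W (c + 1) := fun c _ hw => shiftMem H E 1 hA c hw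
  have hWF : ∀ (c : ℂ) {w : g}, w ∈ W c → F w ∈ W (c + (-1)) := fun c _ hw => shiftMem H F (-1) hHF c hw
  have hx₀W : x₀ ∈ W ν := by
    rw [hWdef, Module.End.mem_maxGenEigenspace]
    exact ⟨1, by simp [hx₀eig]⟩
  -- base case : x₀ ∈ E (W (ν − 1))
  have hbase : x₀ ∈ Submodule.map E (W (ν - 1)) := by
    obtain ⟨y0, hy0⟩ := hx₀range
    have hsplit : (⊤ : Submodule ℂ g) = W (ν - 1) ⊔ ⨆ μ, ⨆ (_ : μ ≠ ν - 1), W μ := by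
      rw [← Module.End.iSup_maxGenEigenspace_eq_top H]
      exact iSup_split_single _ _
    have hy0top : y0 ∈ W (ν - 1) ⊔ ⨆ μ, ⨆ (_ : μ ≠ ν - 1), W μ := hsplit ▸ Submodule.mem_top
    obtain ⟨y₁, hy₁, y₂, hy₂, hsum⟩ := Submodule.mem_sup.mp hy0top
    have hEy₂mem : E y₂ ∈ ⨆ μ, ⨆ (_ : μ ≠ ν), W μ := by
      have h6 : E y₂ ∈ Submodule.map E (⨆ μ, ⨆ (_ : μ ≠ ν - 1), W μ) :=
        Submodule.mem_map_of_mem hy₂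
      have hle : Submodule.map E (⨆ μ, ⨆ (_ : μ ≠ ν - 1), W μ) ≤ ⨆ μ, ⨆ (_ : μ ≠ ν), W μ := by
        simp only [Submodule.map_iSup]
        refine iSup₂_le fun μ hμ => ?_
        have h7 : Submodule.map E (W μ) ≤ W (μ + 1) := by
          rintro _ ⟨w, hw, rfl⟩
          exact hWE μ hw
        exact h7.trans (le_iSup₂_of_le (μ + 1) (fun hc => hμ (by rw [← hc]; ring)) le_rfl)
      exact hle h6
    have hEy₁ : E y₁ ∈ W ν := by
      have := hWE _ hy₁
      rwa [show ν - 1 + 1 = ν by ring] at this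
    have hEy₂ν : E y₂ ∈ W ν := by
      have hxsum : E y₁ + E y₂ = x₀ := by rw [← map_add, hsum, hy0]
      have : E y₂ = x₀ - E y₁ := by rw [← hxsum]; abel
      rw [this]
      exact sub_mem hx₀W hEy₁
    have hEy₂0 : E y₂ = 0 := by
      have hdis := (Module.End.independent_maxGenEigenspace H) ν
      exact Submodule.disjoint_def.mp hdis _ hEy₂ν hEy₂mem
    refine ⟨y₁, hy₁, ?_⟩
    have hxsum : E y₁ + E y₂ = x₀ := by rw [← map_add, hsum, hy0]
    rw [hEy₂0, add_zero] at hxsum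
    exact hxsum
  -- main induction
  have main : ∀ j : ℕ, x₀ ∈ Submodule.map (E ^ (j + 1)) (W (ν - 1 - j)) := by
    intro j
    induction j with
    | zero => simpa using hbase
    | succ j ih =>
      obtain ⟨y, hyW, hyx⟩ := ih
      have hj1 : ((j:ℂ) + 1) ≠ 0 := Nat.cast_add_one_ne_zero j
      have hyFW : F y ∈ W (ν - 1 - j - 1) := by
        have := hWF _ hyW
        rwa [show ν - 1 - (j:ℂ) + (-1) = ν - 1 - j - 1 by ring] at this
      have hEFy : E (F y) ∈ W (ν - 1 - j) := by
        have := hWE _ hyFW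
        rwa [show ν - 1 - (j:ℂ) - 1 + 1 = ν - 1 - j by ring] at this
      have hid := congrArg (fun T : Module.End ℂ g => T y) (commFE E F H hFE hHE j)
      simp only [Module.End.mul_apply, LinearMap.sub_apply, LinearMap.smul_apply,
        LinearMap.add_apply, Module.End.one_apply] at hid
      rw [hyx, hx₀F] at hid
      -- hid : 0 = (E^(j+1)) (F y) - (j+1) • (E^j) (2 • H y + j • y)
      set z : g := E (F y) - ((j:ℂ) + 1) • ((2:ℂ) • H y + (j:ℂ) • y) with hzdef
      have hzker : (E ^ j) z = 0 := by
        have h8 : (E ^ (j + 1)) (F y) = (E ^ j) (E (F y)) := by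
          rw [pow_succ]; rfl
        simp only [map_add, map_smul] at hid
        rw [hzdef, map_sub, map_smul, map_add, map_smul, map_smul, ← h8]
        linear_combination (norm := module) -hid
      set T : Module.End ℂ g := ((2:ℂ) * ((j:ℂ) + 1)) • H + (((j:ℂ) + 1) * (j:ℂ)) • 1 with hTdef
      have hTy : T y = E (F y) - z := by
        rw [hzdef, hTdef]
        simp only [LinearMap.add_apply, LinearMap.smul_apply, Module.End.one_apply]
        module
      have hTinj : ∀ w ∈ W (ν - 1 - j), T w = 0 → w = 0 := by
        intro w hw hTw
        have ha2 : ((2:ℂ) * ((j:ℂ) + 1)) ≠ 0 := mul_ne_zero two_ne_zero hj1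
        have h9 : ((2:ℂ) * ((j:ℂ) + 1)) • H w + (((j:ℂ) + 1) * (j:ℂ)) • w = 0 := by
          have := congrArg (fun u : g => u) hTw
          simpa [hTdef, LinearMap.add_apply, LinearMap.smul_apply] using hTw
        have hHw : H w = (-(j:ℂ)/2) • w := by
          have h10 : ((2:ℂ) * ((j:ℂ) + 1)) • H w = -((((j:ℂ) + 1) * (j:ℂ)) • w) := by
            linear_combination (norm := module) h9
          have h10' := congrArg (fun u : g => ((2 * ((j:ℂ) + 1))⁻¹) • u) h10
          simp only [smul_smul, smul_neg] at h10'
          rw [inv_mul_cancel₀ ha2, one_smul] at h10'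
          rw [h10', ← neg_smul]
          congr 1
          field_simp
        refine eigOfGen H ?_ hw hHw
        intro hc
        have hzero : ((n + j + 2 : ℕ) : ℂ) = 0 := by
          push_cast
          linear_combination (2:ℂ) * hc + h2ν
        have : (n + j + 2 : ℕ) ≠ 0 := by omega
        exact this (by exact_mod_cast hzero)
      set S : Submodule ℂ g :=
        Submodule.map E (W (ν - 1 - j - 1)) ⊔ (LinearMap.ker (E ^ j) ⊓ W (ν - 1 - j)) with hSdef
      have hSle : S ≤ W (ν - 1 - j) := by
        refine sup_le ?_ inf_le_right
        rintro _ ⟨w, hw, rfl⟩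
        have := hWE _ hw
        rwa [show ν - 1 - (j:ℂ) - 1 + 1 = ν - 1 - j by ring] at this
      have hHS : ∀ s ∈ S, H s ∈ S := by
        intro s hs
        obtain ⟨a, ha, b, hb, rfl⟩ := Submodule.mem_sup.mp hs
        have hHa : H a ∈ Submodule.map E (W (ν - 1 - j - 1)) := by
          obtain ⟨w, hw, rfl⟩ := ha
          refine ⟨H w + w, add_mem (memH H _ hw) hw, ?_⟩
          have h12 : (H * E) w = (E * H + E) w := by rw [hHE]
          simp only [Module.End.mul_apply, LinearMap.add_apply] at h12
          rw [map_add, ← h12]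
        have hHb : H b ∈ LinearMap.ker (E ^ j) ⊓ W (ν - 1 - j) := by
          obtain ⟨hbk, hbW⟩ := hb
          have hbk' : (E ^ j) b = 0 := hbk
          refine ⟨?_, memH H _ hbW⟩
          have h13 := congrArg (fun T : Module.End ℂ g => T b) (powHE H E hHE j)
          simp only [Module.End.mul_apply, LinearMap.add_apply, LinearMap.smul_apply] at h13
          -- h13 : H ((E^j) b) = (E^j) (H b) + j • (E^j) b
          show (E ^ j) (H b) = 0
          rw [hbk', map_zero, smul_zero, add_zero] at h13
          exact h13.symm
        rw [map_add]
        exact add_mem (Submodule.mem_sup_left hHa) (Submodule.mem_sup_right hHb)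
      have hTS : ∀ s ∈ S, T s ∈ S := by
        intro s hs
        have h14 : T s = ((2:ℂ) * ((j:ℂ) + 1)) • H s + (((j:ℂ) + 1) * (j:ℂ)) • s := by
          simp [hTdef]
        rw [h14]
        exact add_mem (Submodule.smul_mem _ _ (hHS s hs)) (Submodule.smul_mem _ _ hs)
      have hzW : z ∈ W (ν - 1 - j) := by
        rw [hzdef]
        exact sub_mem hEFy (Submodule.smul_mem _ _
          (add_mem (Submodule.smul_mem _ _ (memH H _ hyW)) (Submodule.smul_mem _ _ hyW)))
      have hTymem : T y ∈ S := by
        rw [hTy]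
        refine sub_mem (Submodule.mem_sup_left ⟨F y, hyFW, rfl⟩)
          (Submodule.mem_sup_right ⟨hzker, hzW⟩)
      have hinj : Function.Injective (T.restrict hTS) := by
        refine LinearMap.ker_eq_bot.mp (LinearMap.ker_eq_bot'.mpr fun m hm => ?_)
        have h15 : T (m : g) = 0 := by
          have := congrArg (Subtype.val : S → g) hm
          simpa [LinearMap.restrict_apply] using this
        exact Subtype.ext (hTinj _ (hSle m.2) h15)
      obtain ⟨s, hs⟩ := (LinearMap.injective_iff_surjective).mp hinj ⟨T y, hTymem⟩
      have hTsy : T (s : g) = T y := by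
        have := congrArg (Subtype.val : S → g) hs
        simpa [LinearMap.restrict_apply] using this
      have hyS : y ∈ S := by
        have h16 : y - (s : g) = 0 :=
          hTinj _ (sub_mem hyW (hSle s.2)) (by rw [map_sub, hTsy, sub_self])
        have h17 : y = (s : g) := by
          rw [← sub_eq_zero]; exact h16
        rw [h17]; exact s.2
      obtain ⟨a, ha, b, hb, hab⟩ := Submodule.mem_sup.mp hyS
      obtain ⟨w, hw, rfl⟩ := ha
      refine ⟨w, by rwa [show ν - 1 - ((j:ℕ) + 1 : ℕ) = ν - 1 - (j:ℂ) - 1 by push_cast; ring], ?_⟩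
      have hEb : (E ^ (j + 1)) b = 0 := by
        have hbk : (E ^ j) b = 0 := hb.1
        rw [pow_succ']
        simp only [Module.End.mul_apply]
        rw [hbk, map_zero]
      have h18 : (E ^ (j + 1)) y = (E ^ (j + 1)) (E w) := by
        rw [← hab, map_add, hEb, add_zero]
      have h19 : (E ^ (j + 1 + 1)) w = (E ^ (j + 1)) (E w) := by
        rw [pow_succ]; rfl
      rw [h19, ← h18, hyx]
  -- conclusion
  have hexists : ∃ j : ℕ, W (ν - 1 - j) = ⊥ := by
    by_contra hc
    push_neg at hc
    have hsub : ∀ j : ℕ, H.HasEigenvalue (ν - 1 - (j:ℂ)) := by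
      intro j
      have h15 : Module.End.HasUnifEigenvalue H (ν - 1 - j) ⊤ := hc j
      exact Module.End.HasUnifEigenvalue.lt (k := ⊤) zero_lt_one h15
    have hinjr : Function.Injective (fun j : ℕ => ν - 1 - (j:ℂ)) := by
      intro a b hab
      have : (a:ℂ) = b := by
        simp only at hab
        linear_combination -hab
      exact_mod_cast this
    exact (Set.infinite_of_injective_forall_mem hinjr hsub) (Module.End.finite_hasEigenvalue H)
  obtain ⟨j, hj⟩ := hexists
  have hfin := main j
  rw [hj, Submodule.map_bot] at hfin
  exact hx₀ne (by simpa using hfin)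

end Core

section Main

variable {g : Type*} [LieRing g] [LieAlgebra ℂ g] [FiniteDimensional ℂ g]

lemma auxMain (B : g →ₗ[ℂ] g →ₗ[ℂ] ℂ)
    (hsymm : ∀ x y : g, B x y = B y x)
    (hinvar : ∀ x y z : g, B ⁅x, y⁆ z = B x ⁅y, z⁆)
    (hnd : ∀ x : g, (∀ y : g, B x y = 0) → x = 0)
    (e h f : g)
    (hhe : ⁅h, e⁆ = e) (hhf : ⁅h, f⁆ = -f) (hef : ⁅e, f⁆ = (2 : ℂ) • h) :
    ∀ x : g, ⁅f, x⁆ = 0 → (∀ y : g, ⁅e, y⁆ = 0 → B x y = 0) → x = 0 := by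
  intro x hxf hxperp
  by_cases hh : h = 0
  · have he0 : e = 0 := by rw [← hhe, hh, zero_lie]
    exact hnd x fun y => hxperp y (by rw [he0, zero_lie])
  · set E : Module.End ℂ g := (LieAlgebra.ad ℂ g) e with hEdef
    set F : Module.End ℂ g := (LieAlgebra.ad ℂ g) f with hFdef
    have hxF : x ∈ LinearMap.ker F := by
      rw [LinearMap.mem_ker]
      show ⁅f, x⁆ = 0
      exact hxf
    -- the pairing map into the dual of ker E
    set Φ : g →ₗ[ℂ] Module.Dual ℂ (LinearMap.ker E) :=
      ((LinearMap.ker E).subtype.dualMap).comp B with hΦdef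
    have hBinj : Function.Injective B := by
      rw [← LinearMap.ker_eq_bot]
      refine LinearMap.ker_eq_bot'.mpr fun m hm => hnd m fun y => ?_
      rw [hm]; rfl
    have hBsurj : Function.Surjective B :=
      (LinearMap.injective_iff_surjective_of_finrank_eq_finrank
        (Subspace.dual_finrank_eq).symm).mp hBinj
    have hΦsurj : Function.Surjective Φ :=
      (LinearMap.dualMap_surjective_of_injective (Submodule.injective_subtype _)).comp hBsurj
    have hrange : LinearMap.range E ≤ LinearMap.ker Φ := by
      rintro _ ⟨u, rfl⟩
      rw [LinearMap.mem_ker]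
      refine LinearMap.ext fun y => ?_
      show B (E u) (y : g) = 0
      have hy : ⁅e, (y : g)⁆ = 0 := y.2
      have h1 : B ⁅u, e⁆ (y : g) = B u ⁅e, (y : g)⁆ := hinvar u e y
      have h2 : (E u : g) = ⁅e, u⁆ := rfl
      have h3 : ⁅e, u⁆ = -⁅u, e⁆ := (lie_skew e u).symm
      rw [h2, h3, map_neg, LinearMap.neg_apply, h1, hy, map_zero, neg_zero]
    have hker : LinearMap.ker Φ = LinearMap.range E := by
      refine (Submodule.eq_of_le_of_finrank_le hrange ?_).symm
      have hfr1 : finrank ℂ (LinearMap.range Φ) + finrank ℂ (LinearMap.ker Φ) = finrank ℂ g :=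
        LinearMap.finrank_range_add_finrank_ker Φ
      have hfr2 : finrank ℂ (LinearMap.range E) + finrank ℂ (LinearMap.ker E) = finrank ℂ g :=
        LinearMap.finrank_range_add_finrank_ker E
      have hrngΦ : LinearMap.range Φ = ⊤ := LinearMap.range_eq_top.mpr hΦsurj
      have h3 : finrank ℂ (LinearMap.range Φ) = finrank ℂ (LinearMap.ker E) := by
        rw [hrngΦ, finrank_top, Subspace.dual_finrank_eq]
      omega
    have hxE : x ∈ LinearMap.range E := by
      rw [← hker, LinearMap.mem_ker]
      refine LinearMap.ext fun y => ?_
      show B x (y : g) = 0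
      exact hxperp _ y.2
    have := core e h f hh hhe hhf hef
    have hx0 : x ∈ (⊥ : Submodule ℂ g) := this ▸ ⟨hxF, hxE⟩
    simpa using hx0

end Main

/-- For an `sl₂`-triple `{e,h,f}` (with `[h,e]=e`, `[h,f]=-f`, `[e,f]=2h`) in a
finite-dimensional complex Lie algebra with invariant nondegenerate symmetric
bilinear form, the pairing between the centralizers `𝔤^f = ker(ad f)` and
`𝔤^e = ker(ad e)` is nondegenerate on both sides. -/
theorem stmt13 {g : Type*} [LieRing g] [LieAlgebra ℂ g] [FiniteDimensional ℂ g]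
    (B : g →ₗ[ℂ] g →ₗ[ℂ] ℂ)
    (hsymm : ∀ x y : g, B x y = B y x)
    (hinvar : ∀ x y z : g, B ⁅x, y⁆ z = B x ⁅y, z⁆)
    (hnd : ∀ x : g, (∀ y : g, B x y = 0) → x = 0)
    (e h f : g)
    (hhe : ⁅h, e⁆ = e) (hhf : ⁅h, f⁆ = -f) (hef : ⁅e, f⁆ = (2 : ℂ) • h) :
    (∀ x : g, ⁅f, x⁆ = 0 → (∀ y : g, ⁅e, y⁆ = 0 → B x y = 0) → x = 0)
    ∧ (∀ y : g, ⁅e, y⁆ = 0 → (∀ x : g, ⁅f, x⁆ = 0 → B x y = 0) → y = 0) := by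
  constructor
  · exact auxMain B hsymm hinvar hnd e h f hhe hhf hef
  · intro y hy hperp
    have hhe' : ⁅-h, f⁆ = f := by rw [neg_lie, hhf, neg_neg]
    have hhf' : ⁅-h, e⁆ = -e := by rw [neg_lie, hhe]
    have hef' : ⁅f, e⁆ = (2 : ℂ) • (-h) := by rw [← lie_skew, hef, smul_neg]
    exact auxMain B hsymm hinvar hnd f (-h) e hhe' hhf' hef' y hy
      fun x hx => (hsymm y x) ▸ hperp x hx
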